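/- Let λ ∈ {1,-1}, ρ ∈ ℝ, let g₀ : [0,∞) → ℂ be continuous and set g₁(t) = ρ·g₀(t) (homogeneous Robin boundary condition). For t ≥ 0 and k ∈ ℂ let Q̃(t,k) be the 2×2 matrix built from (g₀(t), g₁(t)). Fix k ∈ ℂ with 2k ≠ iρ and 2k ≠ -iρ, and suppose Φ⁺, Φ⁻ : [0,∞) → M₂(ℂ) are differentiable matrix functions satisfying Φ⁺(0) = Φ⁻(0) = I and, for all t ≥ 0, (Φ⁺)'(t) = (-2ik²σ₃ + Q̃(t,k))Φ⁺(t) and (Φ⁻)'(t) = (-2ik²σ₃ + Q̃(t,-k))Φ⁻(t) (note (-k)² = k²). Then Φ⁻(t) = N(k) · Φ⁺(t) · N(k)⁻¹ for all t ≥ 0, where N(k) = diag(2k - iρ, -(2k + iρ)); in particular the diagonal entries of Φ⁺ and Φ⁻ coincide, and the (1,2)-entries satisfy Φ⁻₁₂(t) = -((2k - iρ)/(2k + iρ)) Φ⁺₁₂(t). -/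

import Mathlib

open Complex Matrix

attribute [local instance] Matrix.normedAddCommGroup Matrix.normedSpace

/-- The Pauli matrix `σ₃ = diag(1,-1)`. -/
def sigma3 : Matrix (Fin 2) (Fin 2) ℂ := !![1, 0; 0, -1]

/-- The matrix `Q̃(k)` built from boundary values `q`, `p`:
`Q̃(k) = [[iλ|q|², 2kq + ip], [-2kλ·conj(q) + iλ·conj(p), -iλ|q|²]]`. -/
noncomputable def Qtilde (lam q p k : ℂ) : Matrix (Fin 2) (Fin 2) ℂ :=
  !![Complex.I * lam * (‖q‖ : ℂ) ^ 2, 2 * k * q + Complex.I * p;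
     -2 * k * lam * (starRingEnd ℂ) q + Complex.I * lam * (starRingEnd ℂ) p,
     -(Complex.I * lam * (‖q‖ : ℂ) ^ 2)]

/-- The symmetry matrix `N(k) = diag(2k - iρ, -(2k + iρ))` of the Robin problem. -/
noncomputable def robinN (ρ : ℝ) (k : ℂ) : Matrix (Fin 2) (Fin 2) ℂ :=
  !![2 * k - Complex.I * (ρ : ℂ), 0; 0, -(2 * k + Complex.I * (ρ : ℂ))]

/-- Explicit inverse of `robinN`. -/
noncomputable def robinNinv (ρ : ℝ) (k : ℂ) : Matrix (Fin 2) (Fin 2) ℂ :=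
  !![(2 * k - Complex.I * (ρ : ℂ))⁻¹, 0; 0, (-(2 * k + Complex.I * (ρ : ℂ)))⁻¹]

lemma key_intertwine (lam : ℂ) (ρ : ℝ) (q k : ℂ) :
    robinN ρ k * ((-(2 * Complex.I * k ^ 2)) • sigma3 + Qtilde lam q ((ρ : ℂ) * q) k)
      = ((-(2 * Complex.I * k ^ 2)) • sigma3 + Qtilde lam q ((ρ : ℂ) * q) (-k)) * robinN ρ k := by
  ext i j
  fin_cases i <;> fin_cases j <;>
    simp [Matrix.mul_apply, Fin.sum_univ_two, sigma3, Qtilde, robinN, _root_.map_mul,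
      Complex.conj_ofReal] <;> ring

lemma robinN_mul_inv (ρ : ℝ) (k : ℂ) (hk1 : 2 * k ≠ Complex.I * (ρ : ℂ))
    (hk2 : 2 * k ≠ -(Complex.I * (ρ : ℂ))) :
    robinN ρ k * robinNinv ρ k = 1 := by
  have h1 : 2 * k - Complex.I * (ρ : ℂ) ≠ 0 := sub_ne_zero.mpr hk1
  ext i j
  fin_cases i <;> fin_cases j <;>
    simp [Matrix.mul_apply, Fin.sum_univ_two, robinN, robinNinv, Matrix.one_apply] <;>
    field_simp <;>
    exact div_self (by intro h; exact hk2 (by linear_combination -h))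

lemma robinNinv_mul (ρ : ℝ) (k : ℂ) (hk1 : 2 * k ≠ Complex.I * (ρ : ℂ))
    (hk2 : 2 * k ≠ -(Complex.I * (ρ : ℂ))) :
    robinNinv ρ k * robinN ρ k = 1 := by
  have h1 : 2 * k - Complex.I * (ρ : ℂ) ≠ 0 := sub_ne_zero.mpr hk1
  ext i j
  fin_cases i <;> fin_cases j <;>
    simp [Matrix.mul_apply, Fin.sum_univ_two, robinN, robinNinv, Matrix.one_apply] <;>
    field_simp <;>
    exact div_self (by intro h; exact hk2 (by linear_combination -h))

lemma norm_mul_le2 (M X : Matrix (Fin 2) (Fin 2) ℂ) : ‖M * X‖ ≤ 2 * ‖M‖ * ‖X‖ := by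
  have h0 : (0:ℝ) ≤ 2 * ‖M‖ * ‖X‖ := by positivity
  rw [Matrix.norm_le_iff h0]
  intro i j
  rw [Matrix.mul_apply, Fin.sum_univ_two]
  calc ‖M i 0 * X 0 j + M i 1 * X 1 j‖
      ≤ ‖M i 0 * X 0 j‖ + ‖M i 1 * X 1 j‖ := norm_add_le _ _
    _ ≤ ‖M‖ * ‖X‖ + ‖M‖ * ‖X‖ := by
        gcongr <;>
          first
          | exact (norm_mul_le _ _).trans (by
              gcongr <;> exact Matrix.norm_entry_le_entrywise_sup_norm _)
    _ = 2 * ‖M‖ * ‖X‖ := by ring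

lemma entry_bound (lam : ℂ) (hlam1 : ‖lam‖ = 1) (ρ : ℝ) (q k : ℂ) (C₀ : ℝ)
    (hq : ‖q‖ ≤ C₀) (hC₀0 : 0 ≤ C₀) :
    ‖(-(2 * Complex.I * k ^ 2)) • sigma3 + Qtilde lam q ((ρ : ℂ) * q) (-k)‖
      ≤ 2 * ‖k‖ ^ 2 + C₀ ^ 2 + (2 * ‖k‖ + |ρ|) * C₀ := by
  have hC : (0:ℝ) ≤ 2 * ‖k‖ ^ 2 + C₀ ^ 2 + (2 * ‖k‖ + |ρ|) * C₀ := by positivity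
  rw [Matrix.norm_le_iff hC]
  intro i j
  have hmul : (0:ℝ) ≤ 2 * ‖k‖ + |ρ| := by positivity
  have key : (2 * ‖k‖ + |ρ|) * ‖q‖ ≤ (2 * ‖k‖ + |ρ|) * C₀ := by
    exact mul_le_mul_of_nonneg_left hq hmul
  fin_cases i <;> fin_cases j <;>
    (simp only [Matrix.add_apply, Matrix.smul_apply, sigma3, Qtilde, Matrix.of_apply,
      Fin.zero_eta, Fin.mk_one, Fin.isValue,
      Matrix.cons_val', Matrix.cons_val_zero, Matrix.cons_val_one, Matrix.head_cons,
      Matrix.head_fin_const, Matrix.empty_val', Matrix.cons_val_fin_one, smul_eq_mul]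
     refine le_trans (norm_add_le _ _) ?_
     try refine le_trans (add_le_add le_rfl (norm_add_le _ _)) ?_
     simp [norm_mul, norm_neg, norm_pow, Complex.norm_I, Complex.norm_real,
      _root_.map_mul, Complex.norm_conj,
      _root_.abs_abs, Complex.norm_two, hlam1]
     nlinarith [norm_nonneg q, norm_nonneg k, abs_nonneg ρ,
      sq_nonneg (‖q‖ - C₀), key])

/-- For the homogeneous Robin condition `g₁ = ρ g₀`, the fundamental solutions of the t-part
of the Lax pair at spectral parameters `k` and `-k` are conjugate by `N(k)`:
`Φ⁻(t) = N(k) Φ⁺(t) N(k)⁻¹`; in particular the diagonal entries coincide and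
`Φ⁻₁₂(t) = -((2k - iρ)/(2k + iρ)) Φ⁺₁₂(t)`. -/
theorem robin_eigenfunction_symmetry
    (lam : ℂ) (hlam : lam = 1 ∨ lam = -1) (ρ : ℝ)
    (g₀ : ℝ → ℂ) (hg₀ : ContinuousOn g₀ (Set.Ici 0))
    (k : ℂ) (hk1 : 2 * k ≠ Complex.I * (ρ : ℂ)) (hk2 : 2 * k ≠ -(Complex.I * (ρ : ℂ)))
    (Φp Φm : ℝ → Matrix (Fin 2) (Fin 2) ℂ)
    (hΦp0 : Φp 0 = 1) (hΦm0 : Φm 0 = 1)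
    (hΦp : ∀ t : ℝ, 0 ≤ t → HasDerivAt Φp
      (((-(2 * Complex.I * k ^ 2)) • sigma3 + Qtilde lam (g₀ t) ((ρ : ℂ) * g₀ t) k) * Φp t) t)
    (hΦm : ∀ t : ℝ, 0 ≤ t → HasDerivAt Φm
      (((-(2 * Complex.I * k ^ 2)) • sigma3 + Qtilde lam (g₀ t) ((ρ : ℂ) * g₀ t) (-k)) * Φm t) t) :
    ∀ t : ℝ, 0 ≤ t →
      Φm t = robinN ρ k * Φp t * (robinN ρ k)⁻¹ ∧
      Φm t 0 0 = Φp t 0 0 ∧ Φm t 1 1 = Φp t 1 1 ∧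
      Φm t 0 1 = -((2 * k - Complex.I * (ρ : ℂ)) / (2 * k + Complex.I * (ρ : ℂ))) * Φp t 0 1 := by
  have h1 : 2 * k - Complex.I * (ρ : ℂ) ≠ 0 := sub_ne_zero.mpr hk1
  have h2 : -(2 * k + Complex.I * (ρ : ℂ)) ≠ 0 := by
    intro h; exact hk2 (by linear_combination -h)
  have h2' : 2 * k + Complex.I * (ρ : ℂ) ≠ 0 := fun h => h2 (by rw [h, neg_zero])
  have hNinv : (robinN ρ k)⁻¹ = robinNinv ρ k :=
    Matrix.inv_eq_right_inv (robinN_mul_inv ρ k hk1 hk2)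
  have hlam1 : ‖lam‖ = 1 := by rcases hlam with h | h <;> simp [h]
  -- the conjugation map as a continuous linear map
  let L : Matrix (Fin 2) (Fin 2) ℂ →L[ℂ] Matrix (Fin 2) (Fin 2) ℂ :=
    LinearMap.toContinuousLinearMap
      (((LinearMap.mulRight ℂ (robinNinv ρ k)).comp (LinearMap.mulLeft ℂ (robinN ρ k))))
  have hL : ∀ X, L X = robinN ρ k * X * robinNinv ρ k := fun X => rfl
  set Ψ : ℝ → Matrix (Fin 2) (Fin 2) ℂ := fun t => robinN ρ k * Φp t * robinNinv ρ k with hΨdef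
  -- the coefficient matrix at spectral parameter -k
  set A : ℝ → Matrix (Fin 2) (Fin 2) ℂ := fun s =>
    (-(2 * Complex.I * k ^ 2)) • sigma3 + Qtilde lam (g₀ s) ((ρ : ℂ) * g₀ s) (-k) with hAdef
  have hΨderiv : ∀ t : ℝ, 0 ≤ t → HasDerivAt Ψ (A t * Ψ t) t := by
    intro t ht
    have hd := ((L.restrictScalars ℝ).hasFDerivAt).comp_hasDerivAt t (hΦp t ht)
    have heq : L (((-(2 * Complex.I * k ^ 2)) • sigma3
        + Qtilde lam (g₀ t) ((ρ : ℂ) * g₀ t) k) * Φp t) = A t * Ψ t := by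
      rw [hL, ← mul_assoc, key_intertwine lam ρ (g₀ t) k, hAdef, hΨdef]
      simp only [mul_assoc]
    have hd' : HasDerivAt Ψ (L (((-(2 * Complex.I * k ^ 2)) • sigma3
        + Qtilde lam (g₀ t) ((ρ : ℂ) * g₀ t) k) * Φp t)) t := hd
    rw [heq] at hd'
    exact hd'
  -- main claim: Φm t = Ψ t for t ≥ 0
  have main : ∀ t : ℝ, 0 ≤ t → Φm t = Ψ t := by
    intro T hT
    -- bound g₀ on [0, T]
    obtain ⟨C₀, hC₀⟩ : ∃ C₀, ∀ s ∈ Set.Icc (0:ℝ) T, ‖g₀ s‖ ≤ C₀ :=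
      (isCompact_Icc.exists_bound_of_continuousOn (hg₀.mono (fun x hx => hx.1)))
    have hC₀0 : 0 ≤ C₀ := le_trans (norm_nonneg _) (hC₀ 0 ⟨le_refl 0, hT⟩)
    set C : ℝ := 2 * ‖k‖ ^ 2 + C₀ ^ 2 + (2 * ‖k‖ + |ρ|) * C₀ with hCdef
    have hC0 : 0 ≤ C := by positivity
    -- clamp times into [0, T]
    set proj : ℝ → ℝ := fun s => max 0 (min s T) with hprojdef
    have hproj_mem : ∀ s : ℝ, proj s ∈ Set.Icc (0:ℝ) T := fun s =>
      ⟨le_max_left _ _, max_le (by exact hT) (min_le_right _ _)⟩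
    have hproj_id : ∀ s ∈ Set.Icc (0:ℝ) T, proj s = s := by
      intro s hs
      simp [hprojdef, min_eq_left hs.2, max_eq_right hs.1]
    set v : ℝ → Matrix (Fin 2) (Fin 2) ℂ → Matrix (Fin 2) (Fin 2) ℂ :=
      fun s X => A (proj s) * X with hvdef
    have hLip : ∀ s : ℝ, LipschitzWith (2 * C).toNNReal (v s) := by
      intro s
      apply LipschitzWith.of_dist_le_mul
      intro X Y
      rw [dist_eq_norm, dist_eq_norm, hvdef]
      rw [← mul_sub]
      calc ‖A (proj s) * (X - Y)‖ ≤ 2 * ‖A (proj s)‖ * ‖X - Y‖ := norm_mul_le2 _ _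
        _ ≤ 2 * C * ‖X - Y‖ := by
            have hb : ‖A (proj s)‖ ≤ C := by
              rw [hAdef]
              exact entry_bound lam hlam1 ρ (g₀ (proj s)) k C₀
                (hC₀ _ (hproj_mem s)) hC₀0
            have := norm_nonneg (X - Y)
            nlinarith
        _ = ((2 * C).toNNReal : ℝ) * ‖X - Y‖ := by
            rw [Real.coe_toNNReal _ (by positivity)]
    have huniq : Set.EqOn Φm Ψ (Set.Icc 0 T) := by
      apply ODE_solution_unique (v := v) hLip
      · exact fun s hs => ((hΦm s hs.1).continuousAt).continuousWithinAt
      · intro s hs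
        have hds := hΦm s hs.1
        have h' : v s (Φm s) = A s * Φm s := by
          simp only [hvdef]
          rw [hproj_id s ⟨hs.1, le_of_lt hs.2⟩]
        rw [h']
        exact hds.hasDerivWithinAt
      · exact fun s hs => ((hΨderiv s hs.1).continuousAt).continuousWithinAt
      · intro s hs
        have hds := hΨderiv s hs.1
        have h' : v s (Ψ s) = A s * Ψ s := by
          simp only [hvdef]
          rw [hproj_id s ⟨hs.1, le_of_lt hs.2⟩]
        rw [h']
        exact hds.hasDerivWithinAt
      · rw [hΦm0, hΨdef]
        simp only [hΦp0, mul_one]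
        exact (robinN_mul_inv ρ k hk1 hk2).symm
    exact huniq ⟨hT, le_refl T⟩
  intro t ht
  have hmain := main t ht
  have hconj : Φm t = robinN ρ k * Φp t * (robinN ρ k)⁻¹ := by rw [hmain, hNinv]
  have h3 : -(Complex.I * (ρ : ℂ)) - k * 2 ≠ 0 := by
    intro h; exact h2 (by linear_combination h)
  have h4 : -(k * 2) - Complex.I * (ρ : ℂ) ≠ 0 := by
    intro h; exact h2 (by linear_combination h)
  refine ⟨hconj, ?_, ?_, ?_⟩
  · rw [hmain]
    simp only [hΨdef, Matrix.mul_apply, Fin.sum_univ_two, robinN, robinNinv,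
      Matrix.of_apply, Matrix.cons_val', Matrix.cons_val_zero, Matrix.cons_val_one,
      Matrix.head_cons, Matrix.empty_val', Matrix.cons_val_fin_one, Matrix.head_fin_const]
    field_simp
    ring
  · rw [hmain]
    simp only [hΨdef, Matrix.mul_apply, Fin.sum_univ_two, robinN, robinNinv,
      Matrix.of_apply, Matrix.cons_val', Matrix.cons_val_zero, Matrix.cons_val_one,
      Matrix.head_cons, Matrix.empty_val', Matrix.cons_val_fin_one, Matrix.head_fin_const]
    field_simp
    ring
  · rw [hmain]
    simp only [hΨdef, Matrix.mul_apply, Fin.sum_univ_two, robinN, robinNinv,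
      Matrix.of_apply, Matrix.cons_val', Matrix.cons_val_zero, Matrix.cons_val_one,
      Matrix.head_cons, Matrix.empty_val', Matrix.cons_val_fin_one, Matrix.head_fin_const]
    field_simp
    ring
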